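/- Let 1 ≤ t ≤ k ≤ n and let C be a mixed Steiner system MS(t,k,Q) over Q = Z_{q_1} × ⋯ × Z_{q_n}. Then binom(k,t) · |C| = Σ_{Y ⊆ {1,…,n}, |Y| = t} Π_{j ∈ Y} (q_j − 1). -/

import Mathlib

/-- A mixed Steiner system MS(t,k,Q) over the mixed alphabet
`Q = Z_{q i₁} × ⋯ × Z_{q iₙ}` (words are functions `x : ι → ℕ` with `x i < q i`):
a set `C` of words of Hamming weight `k` such that every word of Hamming weight `t`
is at Hamming distance exactly `k - t` from exactly one codeword, and distinct
codewords are at Hamming distance at least `2(k-t)+1`. -/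
def IsMixedSteiner {ι : Type*} [Fintype ι] [DecidableEq ι] (q : ι → ℕ) (t k : ℕ)
    (C : Set (ι → ℕ)) : Prop :=
  (∀ c ∈ C, (∀ i, c i < q i) ∧ hammingNorm c = k) ∧
  (∀ x : ι → ℕ, (∀ i, x i < q i) → hammingNorm x = t →
    ∃! c, c ∈ C ∧ hammingDist x c = k - t) ∧
  (∀ c ∈ C, ∀ c' ∈ C, c ≠ c' → 2 * (k - t) + 1 ≤ hammingDist c c')

private lemma aux_dist_char {n t k : ℕ} (htk : t ≤ k) {c x : Fin n → ℕ}
    (hck : hammingNorm c = k) (hxt : hammingNorm x = t) :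
    hammingDist x c = k - t ↔
      ((Finset.univ.filter fun i => x i ≠ 0) ⊆ (Finset.univ.filter fun i => c i ≠ 0) ∧
        ∀ i, x i ≠ 0 → x i = c i) := by
  classical
  set A : Finset (Fin n) := Finset.univ.filter fun i => c i ≠ 0 with hA
  have hAcard : A.card = k := hck
  have hxcard : (Finset.univ.filter fun i => x i ≠ 0).card = t := hxt
  have hdist : hammingDist x c =
      (A.filter fun i => x i ≠ c i).card + (Aᶜ.filter fun i => x i ≠ 0).card := by
    have hu : (Finset.univ : Finset (Fin n)) = A ∪ Aᶜ := (Finset.union_compl A).symm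
    have h1 : hammingDist x c = ((A ∪ Aᶜ).filter fun i => x i ≠ c i).card := by
      rw [← hu]; rfl
    rw [h1, Finset.filter_union, Finset.card_union_of_disjoint
      (Finset.disjoint_filter_filter disjoint_compl_right)]
    congr 1
    congr 1
    apply Finset.filter_congr
    intro i hi
    have hci : c i = 0 := by
      have := Finset.mem_compl.mp hi
      simp only [hA, Finset.mem_filter, Finset.mem_univ, true_and, not_not] at this
      exact this
    rw [hci]
  have hks : (A.filter fun i => x i ≠ c i).card + (A.filter fun i => x i = c i).card
      = k := by
    rw [← hAcard]
    have h := Finset.card_filter_add_card_filter_not (s := A)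
      (p := fun i => x i ≠ c i)
    have h2 : (A.filter fun a => ¬x a ≠ c a) = A.filter fun i => x i = c i :=
      Finset.filter_congr fun i _ => not_ne_iff
    rw [h2] at h
    exact h
  have hsub : (A.filter fun i => x i = c i) ⊆ Finset.univ.filter fun i => x i ≠ 0 := by
    intro i hi
    simp only [hA, Finset.mem_filter, Finset.mem_univ, true_and] at hi ⊢
    rw [hi.2]; exact hi.1
  have hst : (A.filter fun i => x i = c i).card ≤ t :=
    hxcard ▸ Finset.card_le_card hsub
  constructor
  · intro hd
    rw [hdist] at hd
    have hkey : (A.filter fun i => x i = c i).card = t ∧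
        (Aᶜ.filter fun i => x i ≠ 0).card = 0 := by omega
    have hfe : (A.filter fun i => x i = c i) = Finset.univ.filter fun i => x i ≠ 0 :=
      Finset.eq_of_subset_of_card_le hsub (by rw [hxcard, hkey.1])
    constructor
    · intro i hi
      rw [← hfe] at hi
      exact Finset.mem_filter.mpr ⟨Finset.mem_univ i,
        (Finset.mem_filter.mp ((Finset.mem_filter.mp hi).1)).2⟩
    · intro i hxi
      have hmem : i ∈ Finset.univ.filter fun i => x i ≠ 0 :=
        Finset.mem_filter.mpr ⟨Finset.mem_univ i, hxi⟩
      rw [← hfe] at hmem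
      exact (Finset.mem_filter.mp hmem).2
  · rintro ⟨hsupp, hagree⟩
    have hfe : (A.filter fun i => x i = c i) = Finset.univ.filter fun i => x i ≠ 0 := by
      apply Finset.Subset.antisymm hsub
      intro i hi
      have hxi : x i ≠ 0 := (Finset.mem_filter.mp hi).2
      exact Finset.mem_filter.mpr ⟨hsupp hi, hagree i hxi⟩
    have hse : (A.filter fun i => x i = c i).card = t := by rw [hfe, hxcard]
    have he : (Aᶜ.filter fun i => x i ≠ 0).card = 0 := by
      rw [Finset.card_eq_zero, Finset.filter_eq_empty_iff]
      intro i hi hxi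
      exact (Finset.mem_compl.mp hi)
        (hsupp (Finset.mem_filter.mpr ⟨Finset.mem_univ i, hxi⟩))
    rw [hdist, he]
    omega

private lemma aux_supp_ite {n : ℕ} (c : Fin n → ℕ) (S : Finset (Fin n))
    (hS : ∀ i ∈ S, c i ≠ 0) :
    (Finset.univ.filter fun i => (if i ∈ S then c i else 0) ≠ 0) = S := by
  ext i
  simp only [Finset.mem_filter, Finset.mem_univ, true_and]
  by_cases hi : i ∈ S
  · simp [hi, hS i hi]
  · simp [hi]

private lemma aux_fiber_card {n t k : ℕ} (htk : t ≤ k) (q : Fin n → ℕ)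
    (hq : ∀ i, 2 ≤ q i) {c : Fin n → ℕ} (hcq : ∀ i, c i < q i)
    (hck : hammingNorm c = k) :
    (((Fintype.piFinset fun i => Finset.range (q i)).filter
        fun x => hammingNorm x = t).filter fun x => hammingDist x c = k - t).card
      = Nat.choose k t := by
  classical
  set A : Finset (Fin n) := Finset.univ.filter fun i => c i ≠ 0 with hA
  have hAcard : A.card = k := hck
  have hcA : ∀ i ∈ A, c i ≠ 0 := by
    intro i hi
    exact (Finset.mem_filter.mp hi).2
  rw [show Nat.choose k t = (Finset.powersetCard t A).card by
    rw [Finset.card_powersetCard, hAcard]]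
  apply Finset.card_nbij' (i := fun x => Finset.univ.filter fun i => x i ≠ 0)
    (j := fun S i => if i ∈ S then c i else 0)
  · intro x hx
    simp only [Finset.mem_coe, Finset.mem_filter, Fintype.mem_piFinset, Finset.mem_range] at hx
    obtain ⟨⟨hb, hn⟩, hd⟩ := hx
    have hchar := (aux_dist_char htk hck hn).mp hd
    exact Finset.mem_powersetCard.mpr ⟨hchar.1, hn⟩
  · intro S hS
    obtain ⟨hSA, hSt⟩ := Finset.mem_powersetCard.mp hS
    have hcS : ∀ i ∈ S, c i ≠ 0 := fun i hi => hcA i (hSA hi)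
    have hsupp := aux_supp_ite c S hcS
    have hn : hammingNorm (fun i => if i ∈ S then c i else 0) = t := by
      show (Finset.univ.filter fun i => (if i ∈ S then c i else 0) ≠ 0).card = t
      rw [hsupp, hSt]
    simp only [Finset.mem_coe, Finset.mem_filter, Fintype.mem_piFinset, Finset.mem_range]
    refine ⟨⟨?_, hn⟩, ?_⟩
    · intro i
      by_cases hi : i ∈ S
      · simp only [hi, if_true]; exact hcq i
      · simp only [hi, if_false]; have := hq i; omega
    · rw [aux_dist_char htk hck hn]
      constructor
      · rw [hsupp]; exact hSA
      · intro i hi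
        by_cases hiS : i ∈ S
        · simp [hiS]
        · simp [hiS] at hi
  · intro x hx
    simp only [Finset.mem_coe, Finset.mem_filter, Fintype.mem_piFinset, Finset.mem_range] at hx
    obtain ⟨⟨hb, hn⟩, hd⟩ := hx
    have hchar := (aux_dist_char htk hck hn).mp hd
    funext i
    by_cases hxi : x i = 0
    · simp only [Finset.mem_filter, Finset.mem_univ, true_and, hxi]
      simp
    · have hi : i ∈ Finset.univ.filter fun j => x j ≠ 0 :=
        Finset.mem_filter.mpr ⟨Finset.mem_univ i, hxi⟩
      simp only [hi, if_pos]
      exact (hchar.2 i hxi).symm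
  · intro S hS
    obtain ⟨hSA, hSt⟩ := Finset.mem_powersetCard.mp hS
    exact aux_supp_ite c S (fun i hi => hcA i (hSA hi))

theorem stmt0 {n : ℕ} (q : Fin n → ℕ) (hq : ∀ i, 2 ≤ q i) (t k : ℕ)
    (ht : 1 ≤ t) (htk : t ≤ k) (hkn : k ≤ n)
    (C : Set (Fin n → ℕ)) (hC : IsMixedSteiner q t k C) :
    Nat.choose k t * C.ncard =
      ∑ Y ∈ Finset.powersetCard t (Finset.univ : Finset (Fin n)),
        ∏ j ∈ Y, (q j - 1) := by
  classical
  obtain ⟨hC1, hC2, _⟩ := hC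
  set W : Finset (Fin n → ℕ) :=
    (Fintype.piFinset fun i => Finset.range (q i)).filter
      (fun x => hammingNorm x = t) with hWdef
  -- Count W by supports: W.card = RHS
  have hWcard : W.card =
      ∑ Y ∈ Finset.powersetCard t (Finset.univ : Finset (Fin n)),
        ∏ j ∈ Y, (q j - 1) := by
    rw [Finset.card_eq_sum_card_fiberwise
      (f := fun x => Finset.univ.filter fun i => x i ≠ 0)
      (t := Finset.powersetCard t (Finset.univ : Finset (Fin n)))
      (fun x hx => by
        simp only [hWdef, Finset.mem_coe, Finset.mem_filter] at hx
        exact Finset.mem_powersetCard.mpr ⟨Finset.subset_univ _, hx.2⟩)]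
    apply Finset.sum_congr rfl
    intro Y hY
    have hYt : Y.card = t := (Finset.mem_powersetCard.mp hY).2
    have hset : W.filter (fun x => (Finset.univ.filter fun i => x i ≠ 0) = Y)
        = Fintype.piFinset fun i =>
            if i ∈ Y then Finset.Ico 1 (q i) else ({0} : Finset ℕ) := by
      ext x
      simp only [hWdef, Finset.mem_filter, Fintype.mem_piFinset, Finset.mem_range]
      constructor
      · rintro ⟨⟨hb, hn⟩, hsupp⟩ i
        by_cases hi : i ∈ Y
        · rw [if_pos hi, Finset.mem_Ico]
          have hxi : x i ≠ 0 := by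
            rw [← hsupp] at hi
            exact (Finset.mem_filter.mp hi).2
          exact ⟨Nat.one_le_iff_ne_zero.mpr hxi, hb i⟩
        · rw [if_neg hi, Finset.mem_singleton]
          by_contra hxi
          exact hi (hsupp ▸ Finset.mem_filter.mpr ⟨Finset.mem_univ i, hxi⟩)
      · intro h
        have hsupp : (Finset.univ.filter fun i => x i ≠ 0) = Y := by
          ext i
          simp only [Finset.mem_filter, Finset.mem_univ, true_and]
          by_cases hi : i ∈ Y
          · have := h i; rw [if_pos hi, Finset.mem_Ico] at this
            exact ⟨fun _ => hi, fun _ => by omega⟩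
          · have := h i; rw [if_neg hi, Finset.mem_singleton] at this
            simp [this, hi]
        refine ⟨⟨?_, ?_⟩, hsupp⟩
        · intro i
          by_cases hi : i ∈ Y
          · have := h i; rw [if_pos hi, Finset.mem_Ico] at this; exact this.2
          · have := h i; rw [if_neg hi, Finset.mem_singleton] at this
            rw [this]; have := hq i; omega
        · show (Finset.univ.filter fun i => x i ≠ 0).card = t
          rw [hsupp, hYt]
      done
    rw [hset, Fintype.card_piFinset]
    have : ∀ i, (if i ∈ Y then Finset.Ico 1 (q i) else ({0} : Finset ℕ)).card
        = if i ∈ Y then q i - 1 else 1 := by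
      intro i
      by_cases hi : i ∈ Y <;> simp [hi, Nat.card_Ico]
    rw [Finset.prod_congr rfl fun i _ => this i]
    rw [Finset.prod_ite_mem, Finset.univ_inter]
  -- C is finite
  have hCfin : C.Finite := by
    apply Set.Finite.subset
      (Fintype.piFinset fun i => Finset.range (q i)).finite_toSet
    intro c hc
    simp only [Finset.coe_sort_coe, Finset.mem_coe, Fintype.mem_piFinset,
      Finset.mem_range]
    exact fun i => (hC1 c hc).1 i
  set CF : Finset (Fin n → ℕ) := hCfin.toFinset with hCFdef
  have hncard : C.ncard = CF.card := Set.ncard_eq_toFinset_card C hCfin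
  -- Partition W by covering codewords
  have hpart : W = CF.biUnion fun c => W.filter fun x => hammingDist x c = k - t := by
    apply Finset.Subset.antisymm
    · intro x hx
      have hxW := hx
      simp only [hWdef, Finset.mem_filter, Fintype.mem_piFinset, Finset.mem_range]
        at hx
      obtain ⟨c, ⟨hcC, hcd⟩, _⟩ := hC2 x hx.1 hx.2
      exact Finset.mem_biUnion.mpr ⟨c, hCfin.mem_toFinset.mpr hcC,
        Finset.mem_filter.mpr ⟨hxW, hcd⟩⟩
    · intro x hx
      obtain ⟨c, _, hxc⟩ := Finset.mem_biUnion.mp hx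
      exact (Finset.mem_filter.mp hxc).1
  have hdisj : ∀ c ∈ CF, ∀ c' ∈ CF, c ≠ c' →
      Disjoint (W.filter fun x => hammingDist x c = k - t)
        (W.filter fun x => hammingDist x c' = k - t) := by
    intro c hc c' hc' hne
    rw [Finset.disjoint_left]
    intro x hx hx'
    have hxd := (Finset.mem_filter.mp hx).2
    have hxd' := (Finset.mem_filter.mp hx').2
    have hxW := (Finset.mem_filter.mp hx).1
    simp only [hWdef, Finset.mem_filter, Fintype.mem_piFinset, Finset.mem_range]
      at hxW
    obtain ⟨u, hu, huniq⟩ := hC2 x hxW.1 hxW.2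
    exact hne ((huniq c ⟨hCfin.mem_toFinset.mp hc, hxd⟩).trans
      (huniq c' ⟨hCfin.mem_toFinset.mp hc', hxd'⟩).symm)
  have hWcard2 : W.card = CF.card * Nat.choose k t := by
    rw [hpart, Finset.card_biUnion hdisj]
    rw [Finset.sum_congr rfl (fun c hc => by
      have hcC : c ∈ C := hCfin.mem_toFinset.mp hc
      exact aux_fiber_card htk q hq (hC1 c hcC).1 (hC1 c hcC).2)]
    rw [Finset.sum_const, smul_eq_mul]
  rw [hncard, ← hWcard, hWcard2, Nat.mul_comm]
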